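/- arXiv:1903.11198 — 3 statements merged into one kernel-verified Lean document; each statement's English description precedes it below -/
import Mathlib

section
/- (Theorem 1, identification of degenerate ATEs.) Let (Ω, F, μ) be a probability space, N ≥ 1, and let D : Ω → (Fin N → Bool) be a measurable total treatment assignment vector. For each assignment vector d : Fin N → Bool let Y d : Ω → ℝ be an integrable potential outcome, and define the observed outcome Yobs(ω) = Y (D ω) (ω). Assume the σ-algebra generated by D is independent of the σ-algebra generated by the family (Y d)_{d}. Fix an advertiser j : Fin N and a partial assignment of the other coordinates; let d¹ and d⁰ be the total assignment vectors agreeing with this partial assignment off coordinate j and with d¹(j) = true, d⁰(j) = false. If μ({D = d¹}) > 0 and μ({D = d⁰}) > 0, then E[Yobs | D = d¹] − E[Yobs | D = d⁰] = E[Y d¹ − Y d⁰]; that is, the contrast between the observed-outcome means of j's test and control users who share the same partial treatment assignment identifies the degenerate average treatment effect of j at that state of the world. -/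
open MeasureTheory ProbabilityTheory

lemma setIntegral_eq_measure_mul_integral
    {Ω : Type*} [MeasurableSpace Ω] (μ : Measure Ω) [IsProbabilityMeasure μ]
    (N : ℕ)
    (D : Ω → (Fin N → Bool)) (hD : Measurable D)
    (Y : (Fin N → Bool) → Ω → ℝ) (hY : ∀ d, Integrable (Y d) μ)
    (hindep :
      Indep (MeasurableSpace.comap D inferInstance)
        (⨆ d : Fin N → Bool, MeasurableSpace.comap (Y d) inferInstance) μ)
    (d : Fin N → Bool) :
    ∫ ω in {ω | D ω = d}, Y d ω ∂μ = (μ {ω | D ω = d}).toReal * ∫ ω, Y d ω ∂μ := by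
  set g : Ω → ℝ := fun ω => ({d} : Set (Fin N → Bool)).indicator (fun _ => (1:ℝ)) (D ω) with hg
  have hset : {ω | D ω = d} = D ⁻¹' {d} := rfl
  have hgind : g = (D ⁻¹' {d}).indicator (fun _ => (1:ℝ)) := by
    funext ω
    by_cases h : D ω = d <;> simp [hg, Set.indicator, h]
  have hgle : MeasurableSpace.comap g inferInstance ≤
      MeasurableSpace.comap D inferInstance := by
    have : g = (({d} : Set (Fin N → Bool)).indicator (fun _ => (1:ℝ))) ∘ D := rfl
    rw [this, ← MeasurableSpace.comap_comp]
    exact MeasurableSpace.comap_mono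
      ((measurable_const.indicator (measurableSet_singleton d)).comap_le)
  have hYle : MeasurableSpace.comap (Y d) inferInstance ≤
      ⨆ d' : Fin N → Bool, MeasurableSpace.comap (Y d') inferInstance :=
    le_iSup (fun d' => MeasurableSpace.comap (Y d') inferInstance) d
  have hif : IndepFun g (Y d) μ :=
    indep_of_indep_of_le_right (indep_of_indep_of_le_left hindep hgle) hYle
  have hgint : Integrable g μ := by
    rw [hgind]
    exact (integrable_const (1:ℝ)).indicator (hD (measurableSet_singleton d))
  have hmul := IndepFun.integral_mul_eq_mul_integral hif hgint.aestronglyMeasurable (hY d).aestronglyMeasurable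
  have h1 : g * Y d = (D ⁻¹' {d}).indicator (Y d) := by
    funext ω
    by_cases h : ω ∈ D ⁻¹' {d} <;> simp [hgind, Set.indicator, h]
  have h2 : ∫ ω, g ω ∂μ = (μ (D ⁻¹' {d})).toReal := by
    rw [hgind, integral_indicator (hD (measurableSet_singleton d))]
    simp [Measure.real]
  rw [hset, ← integral_indicator (hD (measurableSet_singleton d)), ← h1]
  calc ∫ ω, (g * Y d) ω ∂μ = (∫ ω, g ω ∂μ) * ∫ ω, Y d ω ∂μ := hmul
    _ = (μ (D ⁻¹' {d})).toReal * ∫ ω, Y d ω ∂μ := by rw [h2]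

/-- Theorem 1 (identification of degenerate ATEs): under the parallel experimentation
design, the contrast between the observed-outcome means of advertiser `j`'s test and
control users who share the same partial treatment assignment identifies the
degenerate average treatment effect `E[Y d¹ - Y d⁰]`. -/
theorem degenerate_ate_identified
    {Ω : Type*} [MeasurableSpace Ω] (μ : Measure Ω) [IsProbabilityMeasure μ]
    (N : ℕ) (hN : 1 ≤ N)
    (D : Ω → (Fin N → Bool)) (hD : Measurable D)
    (Y : (Fin N → Bool) → Ω → ℝ) (hY : ∀ d, Integrable (Y d) μ)
    (Yobs : Ω → ℝ) (hYobs : ∀ ω, Yobs ω = Y (D ω) ω)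
    (hindep :
      Indep (MeasurableSpace.comap D inferInstance)
        (⨆ d : Fin N → Bool, MeasurableSpace.comap (Y d) inferInstance) μ)
    (j : Fin N) (d1 d0 : Fin N → Bool)
    (hagree : ∀ i : Fin N, i ≠ j → d1 i = d0 i)
    (hd1 : d1 j = true) (hd0 : d0 j = false)
    (hpos1 : 0 < μ {ω | D ω = d1}) (hpos0 : 0 < μ {ω | D ω = d0}) :
    (μ {ω | D ω = d1}).toReal⁻¹ * ∫ ω in {ω | D ω = d1}, Yobs ω ∂μ
      - (μ {ω | D ω = d0}).toReal⁻¹ * ∫ ω in {ω | D ω = d0}, Yobs ω ∂μ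
      = ∫ ω, (Y d1 ω - Y d0 ω) ∂μ := by
  have hkey : ∀ d : Fin N → Bool, 0 < μ {ω | D ω = d} →
      (μ {ω | D ω = d}).toReal⁻¹ * ∫ ω in {ω | D ω = d}, Yobs ω ∂μ = ∫ ω, Y d ω ∂μ := by
    intro d hpos
    have hmeas : MeasurableSet {ω | D ω = d} := hD (measurableSet_singleton d)
    have hcong : ∫ ω in {ω | D ω = d}, Yobs ω ∂μ = ∫ ω in {ω | D ω = d}, Y d ω ∂μ := by
      refine setIntegral_congr_fun hmeas fun ω hω => ?_
      rw [hYobs ω, hω]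
    rw [hcong, setIntegral_eq_measure_mul_integral μ N D hD Y hY hindep d,
      ← mul_assoc, inv_mul_cancel₀, one_mul]
    have hne : μ {ω | D ω = d} ≠ 0 := hpos.ne'
    have hfin : μ {ω | D ω = d} ≠ ⊤ := (measure_lt_top μ _).ne
    exact ENNReal.toReal_ne_zero.mpr ⟨hne, hfin⟩
  rw [hkey d1 hpos1, hkey d0 hpos0, integral_sub (hY d1) (hY d0)]
end

section
/- (Theorem 1, within-partition version.) Let (Ω, F, μ) be a probability space, N ≥ 1, D : Ω → (Fin N → Bool) a measurable total treatment assignment vector, and for each d : Fin N → Bool let Y d : Ω → ℝ be an integrable potential outcome with observed outcome Yobs(ω) = Y (D ω) (ω). Let S ∈ F be an event (a target-audience partition) with μ(S) > 0. Assume the σ-algebra generated by D is independent of the σ-algebra generated jointly by S and the family (Y d)_d. Fix j : Fin N and vectors d¹, d⁰ : Fin N → Bool agreeing off coordinate j with d¹(j) = true and d⁰(j) = false. If μ({D = d¹} ∩ S) > 0 and μ({D = d⁰} ∩ S) > 0, then E[Yobs | {D = d¹} ∩ S] − E[Yobs | {D = d⁰} ∩ S] = E[Y d¹ − Y d⁰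 | S]; that is, within the partition S, the test-versus-control contrast among users with the same partial treatment assignment identifies the conditional degenerate average treatment effect of j within that partition. -/
open MeasureTheory ProbabilityTheory

/-- Theorem 1, within-partition version: within a target-audience partition `S`,
the test-versus-control contrast among users with the same partial treatment
assignment identifies the conditional degenerate ATE `E[Y d¹ - Y d⁰ | S]`. -/
theorem degenerate_ate_identified_within_partition
    {Ω : Type*} [MeasurableSpace Ω] (μ : Measure Ω) [IsProbabilityMeasure μ]
    (N : ℕ) (hN : 1 ≤ N)
    (D : Ω → (Fin N → Bool)) (hD : Measurable D)
    (Y : (Fin N → Bool) → Ω → ℝ) (hY : ∀ d, Integrable (Y d) μ)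
    (Yobs : Ω → ℝ) (hYobs : ∀ ω, Yobs ω = Y (D ω) ω)
    (S : Set Ω) (hS : MeasurableSet S) (hSpos : 0 < μ S)
    (hindep :
      Indep (MeasurableSpace.comap D inferInstance)
        (MeasurableSpace.generateFrom {S}
          ⊔ ⨆ d : Fin N → Bool, MeasurableSpace.comap (Y d) inferInstance) μ)
    (j : Fin N) (d1 d0 : Fin N → Bool)
    (hagree : ∀ i : Fin N, i ≠ j → d1 i = d0 i)
    (hd1 : d1 j = true) (hd0 : d0 j = false)
    (hpos1 : 0 < μ ({ω | D ω = d1} ∩ S)) (hpos0 : 0 < μ ({ω | D ω = d0} ∩ S)) :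
    (μ ({ω | D ω = d1} ∩ S)).toReal⁻¹ * ∫ ω in {ω | D ω = d1} ∩ S, Yobs ω ∂μ
      - (μ ({ω | D ω = d0} ∩ S)).toReal⁻¹ * ∫ ω in {ω | D ω = d0} ∩ S, Yobs ω ∂μ
      = (μ S).toReal⁻¹ * ∫ ω in S, (Y d1 ω - Y d0 ω) ∂μ := by
  have hindep' := (Indep_iff _ _ _).1 hindep
  have hSm₂ : MeasurableSet[MeasurableSpace.generateFrom {S}
      ⊔ ⨆ d : Fin N → Bool, MeasurableSpace.comap (Y d) inferInstance] S :=
    (le_sup_left : MeasurableSpace.generateFrom {S} ≤ _) _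
      (MeasurableSpace.measurableSet_generateFrom rfl)
  have key : ∀ d : Fin N → Bool, 0 < μ ({ω | D ω = d} ∩ S) →
      (μ ({ω | D ω = d} ∩ S)).toReal⁻¹ * ∫ ω in {ω | D ω = d} ∩ S, Yobs ω ∂μ
        = (μ S).toReal⁻¹ * ∫ ω in S, Y d ω ∂μ := by
    intro d hpos
    set A := {ω | D ω = d} with hA
    have hAm₁ : MeasurableSet[MeasurableSpace.comap D inferInstance] A :=
      ⟨{d}, MeasurableSet.singleton d, rfl⟩
    have hAmeas : MeasurableSet A := hD (MeasurableSet.singleton d)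
    have hμAS : μ (A ∩ S) = μ A * μ S := hindep' A S hAm₁ hSm₂
    have hcongr : ∫ ω in A ∩ S, Yobs ω ∂μ = ∫ ω in A ∩ S, Y d ω ∂μ := by
      refine setIntegral_congr_fun (hAmeas.inter hS) ?_
      intro ω hω
      have : D ω = d := hω.1
      rw [hYobs, this]
    -- independence of the two indicator functions
    have hf : Measurable[MeasurableSpace.comap D inferInstance]
        (A.indicator (fun _ => (1 : ℝ))) := measurable_const.indicator hAm₁
    have hg : Measurable[MeasurableSpace.generateFrom {S}
        ⊔ ⨆ d : Fin N → Bool, MeasurableSpace.comap (Y d) inferInstance]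
        (S.indicator (Y d)) := by
      refine Measurable.indicator ?_ hSm₂
      refine Measurable.mono (Measurable.of_comap_le le_rfl) ?_ le_rfl
      exact le_trans (le_iSup (fun d => MeasurableSpace.comap (Y d) inferInstance) d) le_sup_right
    have hFG : IndepFun (A.indicator (fun _ => (1 : ℝ))) (S.indicator (Y d)) μ := by
      rw [IndepFun_iff]
      intro t1 t2 ht1 ht2
      exact hindep' t1 t2 (hf.comap_le _ ht1) (hg.comap_le _ ht2)
    have hfInt : Integrable (A.indicator (fun _ => (1 : ℝ))) μ :=
      (integrable_const (1 : ℝ)).indicator hAmeas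
    have hgInt : Integrable (S.indicator (Y d)) μ := (hY d).indicator hS
    have hmul := ProbabilityTheory.IndepFun.integral_mul_eq_mul_integral hFG hfInt.aestronglyMeasurable hgInt.aestronglyMeasurable
    have hprod : (fun ω => A.indicator (fun _ => (1 : ℝ)) ω * S.indicator (Y d) ω)
        = (A ∩ S).indicator (Y d) := by
      funext ω
      rw [← Set.inter_indicator_mul]
      simp
    have hint1 : ∫ ω, A.indicator (fun _ => (1 : ℝ)) ω ∂μ = (μ A).toReal := by
      rw [integral_indicator_const (1 : ℝ) hAmeas]; simp [Measure.real]
    have hint2 : ∫ ω, S.indicator (Y d) ω ∂μ = ∫ ω in S, Y d ω ∂μ :=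
      integral_indicator hS
    have hint3 : ∫ ω in A ∩ S, Y d ω ∂μ = (μ A).toReal * ∫ ω in S, Y d ω ∂μ := by
      rw [← integral_indicator (hAmeas.inter hS), ← hprod]
      exact hmul.trans (by rw [hint1, hint2])
    -- positivity / finiteness facts
    have hApos : 0 < μ A := lt_of_lt_of_le hpos (measure_mono Set.inter_subset_left)
    have hAfin : μ A ≠ ⊤ := measure_ne_top μ A
    have hSfin : μ S ≠ ⊤ := measure_ne_top μ S
    have hAtR : (μ A).toReal ≠ 0 := by
      simp [ENNReal.toReal_eq_zero_iff, hApos.ne', hAfin]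
    have hStR : (μ S).toReal ≠ 0 := by
      simp [ENNReal.toReal_eq_zero_iff, hSpos.ne', hSfin]
    rw [hcongr, hint3, hμAS, ENNReal.toReal_mul]
    field_simp
  rw [key d1 hpos1, key d0 hpos0,
    integral_sub ((hY d1).integrableOn) ((hY d0).integrableOn), mul_sub]
end

section
/- (Corollary 1, identification of prospective ATEs.) Let (Ω, F, μ) be a probability space, N ≥ 1, D : Ω → (Fin N → Bool) a measurable total treatment assignment vector, and for each d : Fin N → Bool let Y d : Ω → ℝ be an integrable potential outcome with observed outcome Yobs(ω) = Y (D ω) (ω). Let S ∈ F with μ(S) > 0 and assume σ(D) is independent of the σ-algebra generated jointly by S and (Y d)_d. Fix j : Fin N, let W denote the finite set of partial assignments w : {i : Fin N // i ≠ j} → Bool, and for each w let w¹ and w⁰ denote the total assignments extending w with coordinate j set to true and false respectively. Let p : W → ℝ be nonnegative weights with ∑_{w ∈ W} p(w) = 1, and suppose μ({D = w¹} ∩ S) > 0 and μ({D = w⁰} ∩ S) > 0 for every w with p(w) > 0. Then the prospective ATE ∑_{w} p(w)·E[Y w¹ − Y w⁰ | S] equals the data functional ∑_{w} p(w)·( E[Yobs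 | {D = w¹} ∩ S] − E[Yobs | {D = w⁰} ∩ S] ); that is, given beliefs p over the degenerate states of the world, the prospective average treatment effect of j within S is identified. -/
open MeasureTheory ProbabilityTheory

/-- Extend a partial treatment assignment `w` of the competitors of `j` to a total
assignment by setting coordinate `j` to `b`. -/
def extendAssign {N : ℕ} (j : Fin N) (w : {i : Fin N // i ≠ j} → Bool) (b : Bool) :
    Fin N → Bool :=
  fun i => if h : i = j then b else w ⟨i, h⟩


lemma indepFun_of_meas {Ω : Type*} {mΩ : MeasurableSpace Ω} {μ : Measure Ω}
    {m₁ m₂ : MeasurableSpace Ω} (h : Indep m₁ m₂ μ) {X Z : Ω → ℝ}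
    (hX : Measurable[m₁] X) (hZ : Measurable[m₂] Z) : IndepFun X Z μ := by
  rw [IndepFun_iff]
  intro t1 t2 h1 h2
  exact (Indep_iff _ _ _).1 h _ _ (hX.comap_le _ h1) (hZ.comap_le _ h2)

lemma key {Ω : Type*} [MeasurableSpace Ω] (μ : Measure Ω) [IsProbabilityMeasure μ]
    {N : ℕ} {D : Ω → (Fin N → Bool)} (hD : Measurable D)
    {Y : (Fin N → Bool) → Ω → ℝ} (hY : ∀ d, Integrable (Y d) μ)
    {Yobs : Ω → ℝ} (hYobs : ∀ ω, Yobs ω = Y (D ω) ω)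
    {S : Set Ω} (hS : MeasurableSet S)
    (hindep :
      Indep (MeasurableSpace.comap D inferInstance)
        (MeasurableSpace.generateFrom {S}
          ⊔ ⨆ d : Fin N → Bool, MeasurableSpace.comap (Y d) inferInstance) μ)
    (d : Fin N → Bool) (hpos : 0 < μ ({ω | D ω = d} ∩ S)) :
    (μ ({ω | D ω = d} ∩ S)).toReal⁻¹ * ∫ ω in {ω | D ω = d} ∩ S, Yobs ω ∂μ
      = (μ S).toReal⁻¹ * ∫ ω in S, Y d ω ∂μ := by
  have hA : {ω | D ω = d} = D ⁻¹' {d} := by ext ω; simp [Set.mem_preimage]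
  have hAm1 : MeasurableSet[MeasurableSpace.comap D inferInstance] {ω | D ω = d} :=
    ⟨{d}, MeasurableSet.singleton d, hA.symm⟩
  have hAm : MeasurableSet {ω | D ω = d} := by
    rw [hA]; exact hD (MeasurableSet.singleton d)
  have hSm2 : MeasurableSet[MeasurableSpace.generateFrom {S}
      ⊔ ⨆ d : Fin N → Bool, MeasurableSpace.comap (Y d) inferInstance] S :=
    (le_sup_left : MeasurableSpace.generateFrom {S} ≤ _) _
      (MeasurableSpace.measurableSet_generateFrom rfl)
  have hmu : μ ({ω | D ω = d} ∩ S) = μ {ω | D ω = d} * μ S :=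
    (Indep_iff _ _ _).1 hindep _ _ hAm1 hSm2
  have hYm2 : Measurable[MeasurableSpace.generateFrom {S}
      ⊔ ⨆ d : Fin N → Bool, MeasurableSpace.comap (Y d) inferInstance] (Y d) := by
    refine measurable_iff_comap_le.2 ?_
    exact le_trans (le_iSup (fun d => MeasurableSpace.comap (Y d) inferInstance) d) le_sup_right
  have hIF : IndepFun (Set.indicator {ω | D ω = d} (fun _ => (1:ℝ)))
      (Set.indicator S (Y d)) μ :=
    indepFun_of_meas hindep ((measurable_const).indicator hAm1) (hYm2.indicator hSm2)
  have hint : ∫ ω in {ω | D ω = d} ∩ S, Y d ω ∂μ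
      = (μ {ω | D ω = d}).toReal * ∫ ω in S, Y d ω ∂μ := by
    have h1 : (fun ω => Set.indicator {ω | D ω = d} (fun _ => (1:ℝ)) ω
        * Set.indicator S (Y d) ω) = Set.indicator ({ω | D ω = d} ∩ S) (Y d) := by
      ext ω
      by_cases h1 : ω ∈ {ω | D ω = d} <;> by_cases h2 : ω ∈ S <;>
        simp [Set.indicator_apply, h1, h2, Set.mem_inter_iff]
    have h2 := IndepFun.integral_mul_eq_mul_integral hIF
      ((integrable_const (1:ℝ)).indicator hAm).aestronglyMeasurable ((hY d).indicator hS).aestronglyMeasurable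
    rw [← integral_indicator (hAm.inter hS), ← h1]
    have h3 : (fun ω => Set.indicator {ω | D ω = d} (fun _ => (1:ℝ)) ω
        * Set.indicator S (Y d) ω)
        = (Set.indicator {ω | D ω = d} (fun _ => (1:ℝ))) * Set.indicator S (Y d) := rfl
    rw [h3, h2]
    have h4 : ({ω | D ω = d}.indicator fun _ => (1:ℝ)) = Set.indicator {ω | D ω = d} 1 := rfl
    rw [h4, integral_indicator_one hAm, integral_indicator hS]
    rfl
  have hobs : ∫ ω in {ω | D ω = d} ∩ S, Yobs ω ∂μ
      = ∫ ω in {ω | D ω = d} ∩ S, Y d ω ∂μ := by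
    refine setIntegral_congr_fun (hAm.inter hS) fun ω hω => ?_
    rw [hYobs ω, hω.1]
  have hApos : μ {ω | D ω = d} ≠ 0 := by
    intro h0
    rw [hmu, h0, zero_mul] at hpos; exact lt_irrefl _ hpos
  have hAfin : μ {ω | D ω = d} ≠ ⊤ := measure_ne_top μ _
  have hSfin : μ S ≠ ⊤ := measure_ne_top μ _
  rw [hobs, hint, hmu, ENNReal.toReal_mul]
  have hAr : (μ {ω | D ω = d}).toReal ≠ 0 := by
    simp [ENNReal.toReal_eq_zero_iff, hApos, hAfin]
  field_simp

/-- Corollary 1 (identification of prospective ATEs): given beliefs `p` over the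
degenerate states of the world, the prospective ATE of advertiser `j` within the
partition `S` equals the corresponding belief-weighted combination of observed
test-versus-control contrasts, and hence is identified by the data. -/
theorem prospective_ate_identified
    {Ω : Type*} [MeasurableSpace Ω] (μ : Measure Ω) [IsProbabilityMeasure μ]
    (N : ℕ) (hN : 1 ≤ N)
    (D : Ω → (Fin N → Bool)) (hD : Measurable D)
    (Y : (Fin N → Bool) → Ω → ℝ) (hY : ∀ d, Integrable (Y d) μ)
    (Yobs : Ω → ℝ) (hYobs : ∀ ω, Yobs ω = Y (D ω) ω)
    (S : Set Ω) (hS : MeasurableSet S) (hSpos : 0 < μ S)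
    (hindep :
      Indep (MeasurableSpace.comap D inferInstance)
        (MeasurableSpace.generateFrom {S}
          ⊔ ⨆ d : Fin N → Bool, MeasurableSpace.comap (Y d) inferInstance) μ)
    (j : Fin N)
    (p : ({i : Fin N // i ≠ j} → Bool) → ℝ)
    (hp : ∀ w, 0 ≤ p w) (hpsum : ∑ w : {i : Fin N // i ≠ j} → Bool, p w = 1)
    (hpos : ∀ w : {i : Fin N // i ≠ j} → Bool, 0 < p w →
      0 < μ ({ω | D ω = extendAssign j w true} ∩ S) ∧
      0 < μ ({ω | D ω = extendAssign j w false} ∩ S)) :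
    ∑ w : {i : Fin N // i ≠ j} → Bool,
        p w * ((μ S).toReal⁻¹ *
          ∫ ω in S, (Y (extendAssign j w true) ω - Y (extendAssign j w false) ω) ∂μ)
      = ∑ w : {i : Fin N // i ≠ j} → Bool,
          p w *
            ((μ ({ω | D ω = extendAssign j w true} ∩ S)).toReal⁻¹ *
                ∫ ω in {ω | D ω = extendAssign j w true} ∩ S, Yobs ω ∂μ
              - (μ ({ω | D ω = extendAssign j w false} ∩ S)).toReal⁻¹ *
                  ∫ ω in {ω | D ω = extendAssign j w false} ∩ S, Yobs ω ∂μ) := by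
  refine Finset.sum_congr rfl fun w _ => ?_
  rcases eq_or_lt_of_le (hp w) with h0 | hpw
  · rw [← h0, zero_mul, zero_mul]
  obtain ⟨h1, h2⟩ := hpos w hpw
  congr 1
  rw [key μ hD hY hYobs hS hindep _ h1, key μ hD hY hYobs hS hindep _ h2,
    integral_sub ((hY _).integrableOn) ((hY _).integrableOn), mul_sub]
end
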